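/- New trigonometric form of a quaternion: let Q = a + b·i + c·j + d·k be a quaternion such that (a + bi)² + (c + di)² ≠ 0 as a complex number. Then there exist complex numbers ρ and α with ρ² = (a+bi)² + (c+di)² such that Q = (ρ·cos α) + (ρ·sin α)·j, i.e., Q = ρ·Cjs(α), where a complex number x + y·i is identified with the quaternion x + y·i + 0·j + 0·k. -/

import Mathlib

open scoped Quaternion
open Complex

/-- The quaternion imaginary unit `j`. -/
def qj : ℍ[ℝ] := ⟨0, 0, 1, 0⟩

/-- The identification of a complex number `x + y·i` with the quaternion
`x + y·i + 0·j + 0·k`. -/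
def cq (z : ℂ) : ℍ[ℝ] := ⟨z.re, z.im, 0, 0⟩

lemma cq_add_mul_qj (u v : ℂ) : cq u + cq v * qj = (⟨u.re, u.im, v.re, v.im⟩ : ℍ[ℝ]) := by
  ext <;> simp [Quaternion.re_mul, Quaternion.imI_mul, Quaternion.imJ_mul, Quaternion.imK_mul] <;> simp [cq, qj, Quaternion.ext_iff]

lemma aux_cos (z₁ z₂ s ρ w : ℂ) (hρ2 : ρ ^ 2 = s) (hρne : ρ ≠ 0)
    (hw : w = z₁ + I * z₂) (hws : w * (z₁ - I * z₂) = s) (hwne : w ≠ 0) :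
    ρ * ((w / ρ + ρ / w) / 2) = z₁ := by
  field_simp
  linear_combination hρ2 - hws + w * hw

lemma aux_sin (z₁ z₂ s ρ w : ℂ) (hρ2 : ρ ^ 2 = s) (hρne : ρ ≠ 0)
    (hw : w = z₁ + I * z₂) (hws : w * (z₁ - I * z₂) = s) (hwne : w ≠ 0) :
    ρ * ((ρ / w - w / ρ) * I / 2) = z₂ := by
  field_simp
  linear_combination I * hρ2 - I * w * hw - I * hws + (- 2 * z₂ * w) * Complex.I_sq

/-- New trigonometric form: if `(a + bi)² + (c + di)² ≠ 0`, then the quaternion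
`a + b·i + c·j + d·k` equals `ρ·Cjs(α) = (ρ·cos α) + (ρ·sin α)·j` for some complex
`ρ, α` with `ρ² = (a+bi)² + (c+di)²`. -/
theorem quaternion_new_trig_form (a b c d : ℝ)
    (h : (a + b * I : ℂ) ^ 2 + (c + d * I : ℂ) ^ 2 ≠ 0) :
    ∃ ρ α : ℂ, ρ ^ 2 = (a + b * I : ℂ) ^ 2 + (c + d * I : ℂ) ^ 2 ∧
      (⟨a, b, c, d⟩ : ℍ[ℝ]) = cq (ρ * Complex.cos α) + cq (ρ * Complex.sin α) * qj := by
  set z₁ : ℂ := a + b * I with hz1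
  set z₂ : ℂ := c + d * I with hz2
  set s : ℂ := z₁ ^ 2 + z₂ ^ 2 with hs
  set ρ : ℂ := Complex.exp (Complex.log s / 2) with hρ
  have hρ2 : ρ ^ 2 = s := by
    rw [hρ, sq, ← Complex.exp_add, add_halves, Complex.exp_log h]
  have hρne : ρ ≠ 0 := Complex.exp_ne_zero _
  set w : ℂ := z₁ + I * z₂ with hw
  have hws : w * (z₁ - I * z₂) = s := by
    rw [hw, hs]; linear_combination (-(z₂ ^ 2)) * Complex.I_sq
  have hwne : w ≠ 0 := by
    intro hw0
    exact h (by rw [← hws, hw0, zero_mul])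
  set α : ℂ := -(Complex.log (w / ρ)) * I with hα
  have heI : Complex.exp (α * I) = w / ρ := by
    rw [hα]
    have h1 : -Complex.log (w / ρ) * I * I = Complex.log (w / ρ) := by
      linear_combination (-(Complex.log (w / ρ))) * Complex.I_sq
    rw [h1, Complex.exp_log (div_ne_zero hwne hρne)]
  have heIn : Complex.exp (-α * I) = ρ / w := by
    rw [neg_mul, Complex.exp_neg, heI, inv_div]
  have hcos : ρ * Complex.cos α = z₁ := by
    rw [Complex.cos, heI, heIn]
    exact aux_cos z₁ z₂ s ρ w hρ2 hρne hw hws hwne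
  have hsin : ρ * Complex.sin α = z₂ := by
    rw [Complex.sin, heI, heIn]
    exact aux_sin z₁ z₂ s ρ w hρ2 hρne hw hws hwne
  refine ⟨ρ, α, hρ2, ?_⟩
  rw [cq_add_mul_qj, hcos, hsin, hz1, hz2]
  ext <;> simp
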